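/- Let α ∈ (0,1) be irrational with convergents p_s/q_s, let n ≥ 1, and let s be such that q_s ≤ n < q_{s+1}. Consider the polynomial P(z,w) = (z^{p_s} − w^{q_s})^{⌊n/q_s⌋}. Then for all complex z with |z| ≤ 1, |P(e^z, e^{αz})| ≤ e^n (2/q_{s+1})^{⌊n/q_s⌋}. -/

import Mathlib

noncomputable def cfGauss (α : ℝ) : ℕ → ℝ
  | 0 => Int.fract α
  | s + 1 => Int.fract (1 / cfGauss α s)

noncomputable def cfA (α : ℝ) : ℕ → ℤ
  | 0 => ⌊α⌋
  | s + 1 => ⌊1 / cfGauss α s⌋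

noncomputable def cfPQ (α : ℝ) : ℕ → ℤ × ℤ
  | 0 => (⌊α⌋, 1)
  | 1 => (cfA α 1 * ⌊α⌋ + 1, cfA α 1)
  | s + 2 => (cfA α (s + 2) * (cfPQ α (s + 1)).1 + (cfPQ α s).1,
              cfA α (s + 2) * (cfPQ α (s + 1)).2 + (cfPQ α s).2)

/-- Numerator `p_s` of the `s`-th continued fraction convergent of `α`. -/
noncomputable def cfP (α : ℝ) (s : ℕ) : ℤ := (cfPQ α s).1

/-- Denominator `q_s` of the `s`-th continued fraction convergent of `α`. -/
noncomputable def cfQ (α : ℝ) (s : ℕ) : ℤ := (cfPQ α s).2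

/-- Distance from a real number to the nearest integer. -/
noncomputable def distZ (x : ℝ) : ℝ := |x - round x|

/-- `D_α(n) = ∏_{k=1}^n dist(kα, ℤ)`. -/
noncomputable def Dalpha (α : ℝ) (n : ℕ) : ℝ := ∏ k ∈ Finset.Icc 1 n, distZ (k * α)

section aux
variable {α : ℝ}

lemma cfGauss_prop (hα : Irrational α) (h01 : α ∈ Set.Ioo (0 : ℝ) 1) : ∀ s, cfGauss α s ∈ Set.Ioo (0:ℝ) 1 ∧ Irrational (cfGauss α s) := by
  intro s
  induction s with
  | zero =>
      have h0 : Int.fract α = α := Int.fract_eq_self.mpr ⟨h01.1.le, h01.2⟩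
      exact ⟨by rw [show cfGauss α 0 = Int.fract α from rfl, h0]; exact h01,
             by rw [show cfGauss α 0 = Int.fract α from rfl, h0]; exact hα⟩
  | succ s ih =>
      obtain ⟨⟨hg0, hg1⟩, hirr⟩ := ih
      have hinv : Irrational (1 / cfGauss α s) := by
        rw [one_div]; exact hirr.inv
      have hfi : Irrational (Int.fract (1 / cfGauss α s)) := by
        unfold Int.fract; exact hinv.sub_intCast _
      refine ⟨⟨?_, ?_⟩, ?_⟩
      · exact lt_of_le_of_ne (Int.fract_nonneg _) (Ne.symm hfi.ne_zero)
      · exact Int.fract_lt_one _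
      · exact hfi

lemma one_le_cfA (hα : Irrational α) (h01 : α ∈ Set.Ioo (0 : ℝ) 1) (s : ℕ) : 1 ≤ cfA α (s + 1) := by
  have h := (cfGauss_prop hα h01 s).1
  have : (1:ℝ) ≤ 1 / cfGauss α s := by rw [le_div_iff₀ h.1]; linarith [h.2]
  exact Int.le_floor.mpr (by exact_mod_cast this)

lemma one_le_cfQ (hα : Irrational α) (h01 : α ∈ Set.Ioo (0 : ℝ) 1) : ∀ s, 1 ≤ cfQ α s := by
  intro s
  match s with
  | 0 => exact le_refl 1
  | 1 => exact one_le_cfA hα h01 0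
  | (s+2) =>
      have h1 := one_le_cfQ hα h01 s
      have h2 := one_le_cfQ hα h01 (s+1)
      have ha := one_le_cfA hα h01 (s+1)
      show 1 ≤ cfA α (s+2) * cfQ α (s+1) + cfQ α s
      nlinarith


noncomputable def Gprod (α : ℝ) (s : ℕ) : ℝ := ∏ i ∈ Finset.range (s+1), cfGauss α i

lemma Gprod_pos (hα : Irrational α) (h01 : α ∈ Set.Ioo (0 : ℝ) 1) (s : ℕ) :
    0 < Gprod α s :=
  Finset.prod_pos fun i _ => ((cfGauss_prop hα h01 i).1).1

lemma gauss_id (hα : Irrational α) (h01 : α ∈ Set.Ioo (0 : ℝ) 1) (s : ℕ) :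
    cfGauss α s * ((cfA α (s+1) : ℝ) + cfGauss α (s+1)) = 1 := by
  have h := (cfGauss_prop hα h01 s).1
  have hne : cfGauss α s ≠ 0 := ne_of_gt h.1
  have h2 : cfGauss α (s+1) = 1 / cfGauss α s - (cfA α (s+1) : ℝ) := by
    show Int.fract (1 / cfGauss α s) = _
    rw [Int.fract]; rfl
  rw [h2]
  field_simp
  ring

lemma floor_alpha (h01 : α ∈ Set.Ioo (0 : ℝ) 1) : ⌊α⌋ = 0 :=
  Int.floor_eq_zero_iff.mpr ⟨h01.1.le, h01.2⟩

lemma cfGauss_zero (h01 : α ∈ Set.Ioo (0 : ℝ) 1) : cfGauss α 0 = α := by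
  show Int.fract α = α
  exact Int.fract_eq_self.mpr ⟨h01.1.le, h01.2⟩

lemma keyE (hα : Irrational α) (h01 : α ∈ Set.Ioo (0 : ℝ) 1) :
    ∀ s, (cfQ α s : ℝ) * α - (cfP α s : ℝ) = (-1)^s * Gprod α s := by
  intro s
  match s with
  | 0 =>
      show ((1:ℤ) : ℝ) * α - ((⌊α⌋ : ℤ) : ℝ) = (-1)^0 * Gprod α 0
      rw [floor_alpha h01]
      simp [Gprod, cfGauss_zero h01]
  | 1 =>
      have hne : α ≠ 0 := ne_of_gt h01.1
      have hA : cfA α 1 = ⌊1/α⌋ := by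
        show ⌊1 / cfGauss α 0⌋ = _
        rw [cfGauss_zero h01]
      have hg1 : cfGauss α 1 = 1 / α - (cfA α 1 : ℝ) := by
        show Int.fract (1 / cfGauss α 0) = _
        rw [Int.fract, cfGauss_zero h01, hA]
      have hQ : cfQ α 1 = cfA α 1 := rfl
      have hP : cfP α 1 = cfA α 1 * ⌊α⌋ + 1 := rfl
      have hG : Gprod α 1 = cfGauss α 0 * cfGauss α 1 := by
        simp [Gprod, Finset.prod_range_succ]
      rw [hQ, hP, floor_alpha h01, hG, cfGauss_zero h01, hg1]
      push_cast
      field_simp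
      ring
  | (s+2) =>
      have e1 := keyE hα h01 s
      have e2 := keyE hα h01 (s+1)
      have gid := gauss_id hα h01 (s+1)
      have hq : (cfQ α (s+2) : ℝ) = (cfA α (s+2) : ℝ) * (cfQ α (s+1) : ℝ) + (cfQ α s : ℝ) := by
        show (((cfA α (s+2) * (cfPQ α (s+1)).2 + (cfPQ α s).2 : ℤ)) : ℝ) = _
        push_cast; rfl
      have hp : (cfP α (s+2) : ℝ) = (cfA α (s+2) : ℝ) * (cfP α (s+1) : ℝ) + (cfP α s : ℝ) := by
        show (((cfA α (s+2) * (cfPQ α (s+1)).1 + (cfPQ α s).1 : ℤ)) : ℝ) = _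
        push_cast; rfl
      have hG1 : Gprod α (s+1) = Gprod α s * cfGauss α (s+1) := Finset.prod_range_succ _ _
      have hG2 : Gprod α (s+2) = Gprod α (s+1) * cfGauss α (s+2) := Finset.prod_range_succ _ _
      rw [hq, hp, hG2, hG1]
      have expand : ((cfA α (s+2):ℝ) * cfQ α (s+1) + cfQ α s) * α -
          ((cfA α (s+2):ℝ) * cfP α (s+1) + cfP α s)
          = (cfA α (s+2):ℝ) * ((cfQ α (s+1):ℝ) * α - cfP α (s+1)) +
            ((cfQ α s : ℝ) * α - cfP α s) := by ring
      rw [hG1] at e2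
      rw [expand, e1, e2]
      have : (1 : ℝ) - (cfA α (s+2) : ℝ) * cfGauss α (s+1) = cfGauss α (s+1) * cfGauss α (s+2) := by
        nlinarith [gid]
      rw [pow_succ, pow_succ, pow_succ]
      linear_combination ((-1:ℝ)^s * Gprod α s) * this


lemma keyF (hα : Irrational α) (h01 : α ∈ Set.Ioo (0 : ℝ) 1) :
    ∀ s, Gprod α s * ((cfQ α (s+1) : ℝ) + (cfQ α s : ℝ) * cfGauss α (s+1)) = 1 := by
  intro s
  induction s with
  | zero =>
      have hne : α ≠ 0 := ne_of_gt h01.1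
      have hA : cfA α 1 = ⌊1/α⌋ := by
        show ⌊1 / cfGauss α 0⌋ = _
        rw [cfGauss_zero h01]
      have hg1 : cfGauss α 1 = 1 / α - (cfA α 1 : ℝ) := by
        show Int.fract (1 / cfGauss α 0) = _
        rw [Int.fract, cfGauss_zero h01, hA]
      have hQ : cfQ α 1 = cfA α 1 := rfl
      have hQ0 : cfQ α 0 = 1 := rfl
      have hG : Gprod α 0 = cfGauss α 0 := by simp [Gprod]
      rw [hQ, hQ0, hG, cfGauss_zero h01, hg1]
      push_cast
      field_simp
      ring
  | succ s ih =>
      have gid := gauss_id hα h01 (s+1)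
      have hq : (cfQ α (s+2) : ℝ) = (cfA α (s+2) : ℝ) * (cfQ α (s+1) : ℝ) + (cfQ α s : ℝ) := by
        show (((cfA α (s+2) * (cfPQ α (s+1)).2 + (cfPQ α s).2 : ℤ)) : ℝ) = _
        push_cast; rfl
      have hG1 : Gprod α (s+1) = Gprod α s * cfGauss α (s+1) := Finset.prod_range_succ _ _
      rw [hG1, hq]
      linear_combination ih + Gprod α s * (cfQ α (s+1) : ℝ) * gid

lemma abs_err (hα : Irrational α) (h01 : α ∈ Set.Ioo (0 : ℝ) 1) (s : ℕ) :
    |(cfQ α s : ℝ) * α - (cfP α s : ℝ)| ≤ 1 / (cfQ α (s+1) : ℝ) := by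
  have hG := Gprod_pos hα h01 s
  have hE := keyE hα h01 s
  have hF := keyF hα h01 s
  have habs : |(cfQ α s : ℝ) * α - (cfP α s : ℝ)| = Gprod α s := by
    rw [hE, abs_mul, abs_pow, abs_neg, abs_one, one_pow, one_mul, abs_of_pos hG]
  rw [habs]
  have hq1 : (1:ℝ) ≤ (cfQ α (s+1) : ℝ) := by exact_mod_cast one_le_cfQ hα h01 (s+1)
  have hq0 : (0:ℝ) ≤ (cfQ α s : ℝ) := by
    have := one_le_cfQ hα h01 s
    exact_mod_cast le_trans zero_le_one this
  have hg : 0 < cfGauss α (s+1) := ((cfGauss_prop hα h01 (s+1)).1).1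
  rw [le_div_iff₀ (by linarith : (0:ℝ) < (cfQ α (s+1) : ℝ))]
  nlinarith [mul_nonneg (mul_nonneg hG.le hq0) hg.le]

lemma cfP_nonneg (hα : Irrational α) (h01 : α ∈ Set.Ioo (0 : ℝ) 1) : ∀ s, 0 ≤ cfP α s := by
  intro s
  match s with
  | 0 => show (0:ℤ) ≤ ⌊α⌋; rw [floor_alpha h01]
  | 1 =>
      show (0:ℤ) ≤ cfA α 1 * ⌊α⌋ + 1
      rw [floor_alpha h01]; simp
  | (s+2) =>
      have h1 := cfP_nonneg hα h01 s
      have h2 := cfP_nonneg hα h01 (s+1)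
      have ha := one_le_cfA hα h01 (s+1)
      show (0:ℤ) ≤ cfA α (s+2) * cfP α (s+1) + cfP α s
      nlinarith

end aux

theorem poly_on_exp_curve_bound (α : ℝ) (hα : Irrational α)
    (h01 : α ∈ Set.Ioo (0 : ℝ) 1) (n s : ℕ) (hn : 1 ≤ n)
    (h1 : (cfQ α s : ℝ) ≤ n) (h2 : (n : ℝ) < cfQ α (s + 1))
    (z : ℂ) (hz : ‖z‖ ≤ 1) :
    ‖(Complex.exp z ^ (cfP α s).toNat -
        Complex.exp ((α : ℂ) * z) ^ (cfQ α s).toNat) ^ (n / (cfQ α s).toNat)‖ ≤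
      Real.exp n * (2 / (cfQ α (s + 1) : ℝ)) ^ (n / (cfQ α s).toNat) := by
  obtain ⟨hα0, hα1⟩ := h01
  have h01' : α ∈ Set.Ioo (0:ℝ) 1 := ⟨hα0, hα1⟩
  have hq1 : (1:ℤ) ≤ cfQ α s := one_le_cfQ hα h01' s
  have hqR : (1:ℝ) ≤ (cfQ α s : ℝ) := by exact_mod_cast hq1
  have hqt : ((cfQ α s).toNat : ℤ) = cfQ α s := Int.toNat_of_nonneg (by linarith)
  have hpt : ((cfP α s).toNat : ℤ) = cfP α s := Int.toNat_of_nonneg (cfP_nonneg hα h01' s)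
  have hnR : (1:ℝ) ≤ (n:ℝ) := by exact_mod_cast hn
  have hQpos : (0:ℝ) < (cfQ α (s+1) : ℝ) := by linarith
  set m : ℕ := n / (cfQ α s).toNat with hm
  set δ : ℝ := (cfQ α s : ℝ) * α - (cfP α s : ℝ) with hδdef
  have hδ : |δ| ≤ 1 / (cfQ α (s+1) : ℝ) := abs_err hα h01' s
  have hδ1 : |δ| ≤ 1 := hδ.trans (by rw [div_le_one hQpos]; linarith)
  have e1 : Complex.exp z ^ (cfP α s).toNat
      = Complex.exp (((cfP α s).toNat : ℂ) * z) := (Complex.exp_nat_mul z _).symm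
  have e2 : Complex.exp ((α:ℂ) * z) ^ (cfQ α s).toNat
      = Complex.exp (((cfQ α s).toNat : ℂ) * ((α:ℂ) * z)) := (Complex.exp_nat_mul _ _).symm
  have key : Complex.exp (((cfP α s).toNat : ℂ) * z)
        - Complex.exp (((cfQ α s).toNat : ℂ) * ((α:ℂ) * z))
      = Complex.exp (((cfQ α s).toNat : ℂ) * ((α:ℂ) * z)) *
          (Complex.exp (((-δ : ℝ) : ℂ) * z) - 1) := by
    rw [mul_sub, ← Complex.exp_add, mul_one]
    congr 2
    have : ((cfP α s : ℤ) : ℂ) = (((cfP α s).toNat : ℕ) : ℂ) := by exact_mod_cast hpt.symm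
    have hq' : ((cfQ α s : ℤ) : ℂ) = (((cfQ α s).toNat : ℕ) : ℂ) := by exact_mod_cast hqt.symm
    push_cast [hδdef]
    rw [← this, ← hq']
    push_cast
    ring
  -- bound on the exponential prefactor
  have habs_exp : ‖Complex.exp (((cfQ α s).toNat : ℂ) * ((α:ℂ) * z))‖
      ≤ Real.exp ((cfQ α s : ℝ) * α) := by
    rw [Complex.norm_exp]
    apply Real.exp_le_exp.mpr
    have hre : ((((cfQ α s).toNat : ℂ)) * ((α:ℂ) * z)).re
        = ((cfQ α s : ℝ) * α) * z.re := by
      have : (((cfQ α s).toNat : ℂ)) * ((α:ℂ) * z) = ((((cfQ α s : ℝ) * α : ℝ)) : ℂ) * z := by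
        have hq' : ((cfQ α s : ℤ) : ℂ) = (((cfQ α s).toNat : ℕ) : ℂ) := by exact_mod_cast hqt.symm
        push_cast
        rw [← hq']
        push_cast
        ring
      rw [this, Complex.re_ofReal_mul]
    rw [hre]
    have hzre : z.re ≤ 1 := le_trans (Complex.re_le_norm z) hz
    have hpos : 0 ≤ (cfQ α s : ℝ) * α := by positivity
    nlinarith
  -- bound on the second factor
  have hwabs : ‖(((-δ : ℝ) : ℂ)) * z‖ ≤ |δ| := by
    rw [norm_mul, Complex.norm_real, Real.norm_eq_abs, abs_neg]
    calc |δ| * ‖z‖ ≤ |δ| * 1 := by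
          exact mul_le_mul_of_nonneg_left hz (abs_nonneg δ)
      _ = |δ| := mul_one _
  have hfac2 : ‖Complex.exp (((-δ : ℝ) : ℂ) * z) - 1‖ ≤ 2 / (cfQ α (s+1) : ℝ) := by
    have h := Complex.norm_exp_sub_one_le (x := (((-δ : ℝ) : ℂ)) * z) (hwabs.trans hδ1)
    calc ‖Complex.exp (((-δ : ℝ) : ℂ) * z) - 1‖
        ≤ 2 * ‖(((-δ : ℝ) : ℂ)) * z‖ := h
      _ ≤ 2 * |δ| := by linarith [hwabs]
      _ ≤ 2 * (1 / (cfQ α (s+1) : ℝ)) := by linarith [hδ]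
      _ = 2 / (cfQ α (s+1) : ℝ) := by ring
  -- per-factor bound
  have hfac : ‖Complex.exp z ^ (cfP α s).toNat
        - Complex.exp ((α:ℂ) * z) ^ (cfQ α s).toNat‖
      ≤ Real.exp ((cfQ α s : ℝ) * α) * (2 / (cfQ α (s+1) : ℝ)) := by
    rw [e1, e2, key, norm_mul]
    exact mul_le_mul habs_exp hfac2 (by positivity) (Real.exp_nonneg _)
  -- final assembly
  rw [norm_pow]
  calc ‖Complex.exp z ^ (cfP α s).toNat
          - Complex.exp ((α:ℂ) * z) ^ (cfQ α s).toNat‖ ^ m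
      ≤ (Real.exp ((cfQ α s : ℝ) * α) * (2 / (cfQ α (s+1) : ℝ))) ^ m := by
        exact pow_le_pow_left₀ (by positivity) hfac m
    _ = Real.exp ((cfQ α s : ℝ) * α) ^ m * (2 / (cfQ α (s+1) : ℝ)) ^ m := mul_pow _ _ _
    _ ≤ Real.exp n * (2 / (cfQ α (s+1) : ℝ)) ^ m := by
        apply mul_le_mul_of_nonneg_right _ (by positivity)
        rw [← Real.exp_nat_mul]
        apply Real.exp_le_exp.mpr
        have hmul : (m * (cfQ α s).toNat : ℕ) ≤ n := Nat.div_mul_le_self n _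
        have hmulR : (m : ℝ) * ((cfQ α s).toNat : ℝ) ≤ (n : ℝ) := by exact_mod_cast hmul
        have hcast : (((cfQ α s).toNat : ℕ) : ℝ) = (cfQ α s : ℝ) := by exact_mod_cast hqt
        rw [hcast] at hmulR
        have hm0 : (0:ℝ) ≤ (m:ℝ) := Nat.cast_nonneg m
        nlinarith [hα1.le, hα0.le]
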